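/- arXiv:2102.02628 — 3 statements merged into one kernel-verified Lean document; each statement's English description precedes it below -/
import Mathlib

section
/- Let l ≥ 1 and N ≥ 1 be integers, and let (M_𝐢)_{𝐢 ∈ {1,…,N}^l} be a family of square-integrable real-valued random variables on a common probability space such that: (a) E[M_𝐢] = 0 for every l-tuple 𝐢; (b) E[M_𝐢²] ≤ K for every l-tuple 𝐢, for some constant K ≥ 0; (c) M_𝐢 and M_𝐣 are independent whenever the 2l indices i₁,…,i_l, j₁,…,j_l are pairwise distinct. Then E[( N^{-l} ∑_{𝐢 ∈ {1,…,N}^l} M_𝐢 )²] ≤ l(2l−1)·K/N. -/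
open MeasureTheory ProbabilityTheory

private lemma card_collide_le' (l N : ℕ) (a b : Fin l) (hab : a ≠ b) :
    ((Finset.univ : Finset (Fin l → Fin N)).filter fun f => f a = f b).card ≤ N ^ (l - 1) := by
  classical
  have h : ((Finset.univ : Finset (Fin l → Fin N)).filter fun f => f a = f b).card
      ≤ (Finset.univ : Finset ({j : Fin l // j ≠ b} → Fin N)).card := by
    apply Finset.card_le_card_of_injOn
      (fun f : Fin l → Fin N => (fun j : {j : Fin l // j ≠ b} => f j.1))
      (fun f _ => Finset.mem_univ _)
    intro f hf g hg h
    have hf' : f a = f b := by simpa using hf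
    have hg' : g a = g b := by simpa using hg
    funext x
    by_cases hx : x = b
    · subst hx
      calc f x = f a := hf'.symm
        _ = g a := congrFun h ⟨a, hab⟩
        _ = g x := hg'
    · exact congrFun h ⟨x, hx⟩
  have hcard : Fintype.card {j : Fin l // j ≠ b} = l - 1 := by
    simp [Fintype.card_subtype_compl]
  rwa [Finset.card_univ, Fintype.card_fun, Fintype.card_fin, hcard] at h

private lemma card_cross_le' (l N : ℕ) (a b : Fin l) :
    (((Finset.univ ×ˢ Finset.univ) : Finset ((Fin l → Fin N) × (Fin l → Fin N))).filter
      fun p => p.1 a = p.2 b).card ≤ N ^ l * N ^ (l - 1) := by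
  classical
  have h : (((Finset.univ ×ˢ Finset.univ) : Finset ((Fin l → Fin N) × (Fin l → Fin N))).filter
        fun p => p.1 a = p.2 b).card
      ≤ (Finset.univ : Finset ((Fin l → Fin N) × ({j : Fin l // j ≠ b} → Fin N))).card := by
    apply Finset.card_le_card_of_injOn
      (fun p : (Fin l → Fin N) × (Fin l → Fin N) =>
        (p.1, fun j : {j : Fin l // j ≠ b} => p.2 j.1))
      (fun p _ => Finset.mem_univ _)
    intro p hp q hq h
    have hp' : p.1 a = p.2 b := by simpa using hp
    have hq' : q.1 a = q.2 b := by simpa using hq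
    simp only [Prod.mk.injEq] at h
    obtain ⟨h1, h2⟩ := h
    refine Prod.ext h1 ?_
    funext x
    by_cases hx : x = b
    · subst hx
      calc p.2 x = p.1 a := hp'.symm
        _ = q.1 a := by rw [h1]
        _ = q.2 x := hq'
    · exact congrFun h2 ⟨x, hx⟩
  have hcard : Fintype.card {j : Fin l // j ≠ b} = l - 1 := by
    simp [Fintype.card_subtype_compl]
  rw [Finset.card_univ, Fintype.card_prod, Fintype.card_fun, Fintype.card_fun, hcard] at h
  simpa using h

private lemma two_mul_card_lt' (l : ℕ) :
    2 * ((Finset.univ : Finset (Fin l × Fin l)).filter fun p => p.1 < p.2).card = l * l - l := by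
  classical
  set P := (Finset.univ : Finset (Fin l × Fin l)).filter fun p => p.1 < p.2 with hP
  set Q := (Finset.univ : Finset (Fin l × Fin l)).filter fun p => p.2 < p.1 with hQ
  have hcard : P.card = Q.card := by
    apply Finset.card_bij (fun p _ => Prod.swap p)
    · intro p hp; simp only [hP, hQ, Finset.mem_filter, Finset.mem_univ, true_and] at *
      exact hp
    · intro p _ q _ h; exact Prod.swap_injective h
    · intro q hq; refine ⟨q.swap, ?_, by simp⟩
      simp only [hP, hQ, Finset.mem_filter, Finset.mem_univ, true_and] at *
      exact hq
  have hdisj : Disjoint P Q := by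
    rw [Finset.disjoint_left]
    intro p hp hq
    simp only [hP, hQ, Finset.mem_filter, Finset.mem_univ, true_and] at hp hq
    exact absurd hq (not_lt_of_gt hp)
  have hunion : P ∪ Q = (Finset.univ : Finset (Fin l)).offDiag := by
    ext p
    simp only [hP, hQ, Finset.mem_union, Finset.mem_filter, Finset.mem_univ, true_and,
      Finset.mem_offDiag]
    constructor
    · rintro (h | h)
      · exact ne_of_lt h
      · exact (ne_of_lt h).symm
    · exact fun h => lt_or_gt_of_ne h
  have := Finset.card_union_of_disjoint hdisj
  rw [hunion, Finset.offDiag_card, Finset.card_univ, Fintype.card_fin, ← hcard] at this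
  omega

private lemma card_bad_le' (l N : ℕ) (hl : 1 ≤ l)
    [DecidablePred fun p : (Fin l → Fin N) × (Fin l → Fin N) =>
      ¬ (Function.Injective p.1 ∧ Function.Injective p.2 ∧ ∀ a b, p.1 a ≠ p.2 b)] :
    (((Finset.univ ×ˢ Finset.univ) : Finset ((Fin l → Fin N) × (Fin l → Fin N))).filter
      fun p => ¬ (Function.Injective p.1 ∧ Function.Injective p.2 ∧ ∀ a b, p.1 a ≠ p.2 b)).card
      ≤ l * (2 * l - 1) * N ^ (2 * l - 1) := by
  classical
  set T := Fin l → Fin N with hT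
  set P2 := (Finset.univ : Finset (Fin l × Fin l)).filter (fun p => p.1 < p.2) with hP2
  set A := (Finset.univ : Finset T).filter
    (fun f => ∃ q : Fin l × Fin l, q.1 < q.2 ∧ f q.1 = f q.2) with hA
  set C := ((Finset.univ ×ˢ Finset.univ) : Finset (T × T)).filter
    (fun p => ∃ a b : Fin l, p.1 a = p.2 b) with hC
  -- the bad set is covered
  have hsub : (((Finset.univ ×ˢ Finset.univ) : Finset (T × T)).filter
      fun p => ¬ (Function.Injective p.1 ∧ Function.Injective p.2 ∧ ∀ a b, p.1 a ≠ p.2 b))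
      ⊆ (A ×ˢ Finset.univ) ∪ ((Finset.univ ×ˢ A) ∪ C) := by
    intro p hp
    rw [Finset.mem_filter] at hp
    obtain ⟨-, hbad⟩ := hp
    simp only [Finset.mem_union, Finset.mem_product, Finset.mem_filter, Finset.mem_univ,
      true_and, and_true, hA, hC]
    by_cases h1 : Function.Injective p.1
    · by_cases h2 : Function.Injective p.2
      · have h3 : ¬ ∀ a b, p.1 a ≠ p.2 b := fun h => hbad ⟨h1, h2, h⟩
        push_neg at h3
        right; right
        obtain ⟨a, b, hab⟩ := h3
        exact ⟨a, b, hab⟩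
      · rw [Function.not_injective_iff] at h2
        obtain ⟨a, b, heq, hne⟩ := h2
        right; left
        rcases Ne.lt_or_gt hne with h | h
        · exact ⟨(a, b), h, heq⟩
        · exact ⟨(b, a), h, heq.symm⟩
    · rw [Function.not_injective_iff] at h1
      obtain ⟨a, b, heq, hne⟩ := h1
      left
      rcases Ne.lt_or_gt hne with h | h
      · exact ⟨(a, b), h, heq⟩
      · exact ⟨(b, a), h, heq.symm⟩
  have hAcard : A.card ≤ P2.card * N ^ (l - 1) := by
    have hsubA : A ⊆ P2.biUnion
        (fun q => (Finset.univ : Finset T).filter fun f => f q.1 = f q.2) := by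
      intro f hf
      simp only [hA, Finset.mem_filter, Finset.mem_univ, true_and] at hf
      obtain ⟨q, hq, heq⟩ := hf
      rw [Finset.mem_biUnion]
      exact ⟨q, by simp [hP2, hq], by simp [heq]⟩
    calc A.card ≤ _ := Finset.card_le_card hsubA
      _ ≤ ∑ q ∈ P2, ((Finset.univ : Finset T).filter fun f => f q.1 = f q.2).card :=
        Finset.card_biUnion_le
      _ ≤ P2.card * N ^ (l - 1) := by
        rw [← smul_eq_mul]
        apply Finset.sum_le_card_nsmul
        intro q hq
        have hne : q.1 ≠ q.2 := ne_of_lt (by simpa [hP2] using hq)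
        exact card_collide_le' l N q.1 q.2 hne
  have hCcard : C.card ≤ l * l * (N ^ l * N ^ (l - 1)) := by
    have hsubC : C ⊆ ((Finset.univ ×ˢ Finset.univ) : Finset (Fin l × Fin l)).biUnion
        (fun q => ((Finset.univ ×ˢ Finset.univ) : Finset (T × T)).filter
          fun p => p.1 q.1 = p.2 q.2) := by
      intro p hp
      simp only [hC, Finset.mem_filter] at hp
      obtain ⟨hmem, a, b, heq⟩ := hp
      rw [Finset.mem_biUnion]
      exact ⟨(a, b), by simp, Finset.mem_filter.mpr ⟨hmem, heq⟩⟩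
    calc C.card ≤ _ := Finset.card_le_card hsubC
      _ ≤ ∑ q ∈ ((Finset.univ ×ˢ Finset.univ) : Finset (Fin l × Fin l)),
          (((Finset.univ ×ˢ Finset.univ) : Finset (T × T)).filter
            fun p => p.1 q.1 = p.2 q.2).card := Finset.card_biUnion_le
      _ ≤ l * l * (N ^ l * N ^ (l - 1)) := by
        rw [← smul_eq_mul]
        have hc : ((Finset.univ ×ˢ Finset.univ) : Finset (Fin l × Fin l)).card = l * l := by
          simp
        rw [← hc]
        apply Finset.sum_le_card_nsmul
        intro q _
        exact card_cross_le' l N q.1 q.2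
  have hTuniv : (Finset.univ : Finset T).card = N ^ l := by
    rw [Finset.card_univ]
    show Fintype.card (Fin l → Fin N) = N ^ l
    simp
  have h2x := two_mul_card_lt' l
  rw [← hP2] at h2x
  have hcover : (((Finset.univ ×ˢ Finset.univ) : Finset (T × T)).filter
      fun p => ¬ (Function.Injective p.1 ∧ Function.Injective p.2 ∧ ∀ a b, p.1 a ≠ p.2 b)).card
      ≤ A.card * N ^ l + (N ^ l * A.card + C.card) := by
    calc _ ≤ ((A ×ˢ Finset.univ) ∪ ((Finset.univ ×ˢ A) ∪ C)).card := Finset.card_le_card hsub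
      _ ≤ (A ×ˢ (Finset.univ : Finset T)).card + (((Finset.univ : Finset T) ×ˢ A) ∪ C).card :=
        Finset.card_union_le _ _
      _ ≤ (A ×ˢ (Finset.univ : Finset T)).card
          + ((((Finset.univ : Finset T)) ×ˢ A).card + C.card) := by
        gcongr
        exact Finset.card_union_le _ _
      _ = A.card * N ^ l + (N ^ l * A.card + C.card) := by
        rw [Finset.card_product, Finset.card_product, hTuniv]
  -- arithmetic
  have hpow : N ^ l * N ^ (l - 1) = N ^ (2 * l - 1) := by
    rw [← pow_add]
    congr 1
    omega
  have hAcard' : A.card ≤ P2.card * N ^ (l - 1) := hAcard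
  have hle : A.card * N ^ l + (N ^ l * A.card + C.card)
      ≤ (2 * P2.card + l * l) * (N ^ l * N ^ (l - 1)) := by
    have h1 : A.card * N ^ l ≤ P2.card * N ^ (l - 1) * N ^ l :=
      Nat.mul_le_mul_right _ hAcard
    have h2 : N ^ l * A.card ≤ N ^ l * (P2.card * N ^ (l - 1)) :=
      Nat.mul_le_mul_left _ hAcard
    calc A.card * N ^ l + (N ^ l * A.card + C.card)
        ≤ P2.card * N ^ (l - 1) * N ^ l
          + (N ^ l * (P2.card * N ^ (l - 1)) + l * l * (N ^ l * N ^ (l - 1))) := by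
          gcongr
      _ = (2 * P2.card + l * l) * (N ^ l * N ^ (l - 1)) := by ring
  have hfinal : (2 * P2.card + l * l) * (N ^ l * N ^ (l - 1))
      = l * (2 * l - 1) * N ^ (2 * l - 1) := by
    rw [hpow, h2x]
    congr 1
    have h1 : l ≤ l * l := Nat.le_mul_of_pos_left l hl
    have h2 : l * (2 * l - 1) = l * (2 * l) - l := by
      have := Nat.mul_pred l (2 * l)
      have hpred : 2 * l - 1 = Nat.pred (2 * l) := rfl
      rw [hpred, this]
    have h3 : l * (2 * l) = 2 * (l * l) := by ring
    rw [h2, h3]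
    omega
  calc _ ≤ A.card * N ^ l + (N ^ l * A.card + C.card) := hcover
    _ ≤ (2 * P2.card + l * l) * (N ^ l * N ^ (l - 1)) := hle
    _ = l * (2 * l - 1) * N ^ (2 * l - 1) := hfinal

private lemma mul_integrable' {Ω : Type*} [MeasurableSpace Ω] {P : Measure Ω}
    {f g : Ω → ℝ} (hf : MemLp f 2 P) (hg : MemLp g 2 P) :
    Integrable (fun ω => f ω * g ω) P := by
  refine Integrable.mono' ((hf.integrable_sq.add hg.integrable_sq).div_const 2)
    (hf.aestronglyMeasurable.mul hg.aestronglyMeasurable) (ae_of_all _ fun ω => ?_)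
  simp only [Real.norm_eq_abs, abs_mul, Pi.add_apply]
  nlinarith [sq_abs (f ω), sq_abs (g ω), abs_nonneg (f ω), abs_nonneg (g ω),
    sq_nonneg (|f ω| - |g ω|)]


/-- Variance-type bound for averages of weakly dependent arrays:
if `(M i)` for `i : {1,…,N}^l` are mean-zero square-integrable random variables with
second moment bounded by `K`, such that `M i` and `M j` are independent whenever the
`2l` indices of `i` and `j` are pairwise distinct, then
`E[(N^{-l} ∑ i, M i)²] ≤ l(2l−1)K/N`. -/
theorem large_N_variance_bound
    {Ω : Type*} [MeasurableSpace Ω] (P : Measure Ω) [IsProbabilityMeasure P]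
    (l N : ℕ) (hl : 1 ≤ l) (hN : 1 ≤ N)
    (M : (Fin l → Fin N) → Ω → ℝ) (K : ℝ) (hK : 0 ≤ K)
    (hL2 : ∀ i, MemLp (M i) 2 P)
    (hmean : ∀ i, ∫ ω, M i ω ∂P = 0)
    (hvar : ∀ i, ∫ ω, (M i ω) ^ 2 ∂P ≤ K)
    (hindep : ∀ i j : Fin l → Fin N,
      Function.Injective i → Function.Injective j →
      (∀ a b : Fin l, i a ≠ j b) →
      IndepFun (M i) (M j) P) :
    ∫ ω, (((N : ℝ) ^ l)⁻¹ * ∑ i : Fin l → Fin N, M i ω) ^ 2 ∂P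
      ≤ (l : ℝ) * (2 * l - 1) * K / N := by
  classical
  have hInt : ∀ i j : Fin l → Fin N, Integrable (fun ω => M i ω * M j ω) P :=
    fun i j => mul_integrable' (hL2 i) (hL2 j)
  -- generic bound on each cross term
  have hbound : ∀ i j : Fin l → Fin N, ∫ ω, M i ω * M j ω ∂P ≤ K := by
    intro i j
    have h1 : ∫ ω, M i ω * M j ω ∂P ≤ ∫ ω, (M i ω ^ 2 + M j ω ^ 2) / 2 ∂P := by
      apply integral_mono (hInt i j) (((hL2 i).integrable_sq.add (hL2 j).integrable_sq).div_const 2)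
      intro ω
      show M i ω * M j ω ≤ (M i ω ^ 2 + M j ω ^ 2) / 2
      nlinarith [sq_nonneg (M i ω - M j ω)]
    have h2 : ∫ ω, (M i ω ^ 2 + M j ω ^ 2) / 2 ∂P
        = ((∫ ω, M i ω ^ 2 ∂P) + ∫ ω, M j ω ^ 2 ∂P) / 2 := by
      rw [integral_div, integral_add (hL2 i).integrable_sq (hL2 j).integrable_sq]
    have h3 := hvar i
    have h4 := hvar j
    linarith
  -- vanishing for "good" pairs
  have hzero : ∀ i j : Fin l → Fin N,
      (Function.Injective i ∧ Function.Injective j ∧ ∀ a b, i a ≠ j b) →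
      ∫ ω, M i ω * M j ω ∂P = 0 := by
    rintro i j ⟨h1, h2, h3⟩
    have hind := hindep i j h1 h2 h3
    have := hind.integral_mul_eq_mul_integral ((hL2 i).integrable one_le_two).aestronglyMeasurable
      ((hL2 j).integrable one_le_two).aestronglyMeasurable
    calc ∫ ω, M i ω * M j ω ∂P = ∫ ω, (M i * M j) ω ∂P := rfl
      _ = (∫ ω, M i ω ∂P) * ∫ ω, M j ω ∂P := this
      _ = 0 := by rw [hmean i, hmean j, mul_zero]
  -- expand the square of the sum
  have expand : ∫ ω, (∑ i : Fin l → Fin N, M i ω) ^ 2 ∂P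
      = ∑ p ∈ ((Finset.univ ×ˢ Finset.univ) :
          Finset ((Fin l → Fin N) × (Fin l → Fin N))), ∫ ω, M p.1 ω * M p.2 ω ∂P := by
    have hpt : ∀ ω, (∑ i : Fin l → Fin N, M i ω) ^ 2
        = ∑ p ∈ ((Finset.univ ×ˢ Finset.univ) :
          Finset ((Fin l → Fin N) × (Fin l → Fin N))), M p.1 ω * M p.2 ω := by
      intro ω
      rw [sq, Finset.sum_mul_sum, Finset.sum_product]
    simp_rw [hpt]
    exact integral_finset_sum _ (fun p _ => hInt p.1 p.2)
  -- bound the sum of cross terms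
  set Bad := fun p : (Fin l → Fin N) × (Fin l → Fin N) =>
    ¬ (Function.Injective p.1 ∧ Function.Injective p.2 ∧ ∀ a b, p.1 a ≠ p.2 b) with hBad
  have key : ∫ ω, (∑ i : Fin l → Fin N, M i ω) ^ 2 ∂P
      ≤ ((l * (2 * l - 1) * N ^ (2 * l - 1) : ℕ) : ℝ) * K := by
    rw [expand]
    have step1 : ∑ p ∈ ((Finset.univ ×ˢ Finset.univ) :
          Finset ((Fin l → Fin N) × (Fin l → Fin N))), ∫ ω, M p.1 ω * M p.2 ω ∂P
        ≤ ∑ p ∈ ((Finset.univ ×ˢ Finset.univ) :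
          Finset ((Fin l → Fin N) × (Fin l → Fin N))), (if Bad p then K else 0) := by
      apply Finset.sum_le_sum
      intro p _
      by_cases hb : Bad p
      · rw [if_pos hb]; exact hbound p.1 p.2
      · rw [if_neg hb, hzero p.1 p.2 (not_not.mp hb)]
    have step2 : ∑ p ∈ ((Finset.univ ×ˢ Finset.univ) :
          Finset ((Fin l → Fin N) × (Fin l → Fin N))), (if Bad p then K else 0)
        = ((((Finset.univ ×ˢ Finset.univ) :
          Finset ((Fin l → Fin N) × (Fin l → Fin N))).filter Bad).card : ℝ) * K := by
      rw [← Finset.sum_filter, Finset.sum_const, nsmul_eq_mul]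
    have step3 : ((((Finset.univ ×ˢ Finset.univ) :
          Finset ((Fin l → Fin N) × (Fin l → Fin N))).filter Bad).card : ℝ) * K
        ≤ ((l * (2 * l - 1) * N ^ (2 * l - 1) : ℕ) : ℝ) * K := by
      apply mul_le_mul_of_nonneg_right _ hK
      exact_mod_cast card_bad_le' l N hl
    linarith
  -- now put it together
  have hc : ∀ ω, (((N : ℝ) ^ l)⁻¹ * ∑ i : Fin l → Fin N, M i ω) ^ 2
      = (((N : ℝ) ^ l)⁻¹) ^ 2 * (∑ i : Fin l → Fin N, M i ω) ^ 2 := fun ω => by ring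
  simp_rw [hc]
  rw [integral_const_mul]
  have hNpos : (0 : ℝ) < (N : ℝ) := by exact_mod_cast hN
  have hc2 : (0 : ℝ) ≤ (((N : ℝ) ^ l)⁻¹) ^ 2 := by positivity
  calc (((N : ℝ) ^ l)⁻¹) ^ 2 * ∫ ω, (∑ i : Fin l → Fin N, M i ω) ^ 2 ∂P
      ≤ (((N : ℝ) ^ l)⁻¹) ^ 2 * (((l * (2 * l - 1) * N ^ (2 * l - 1) : ℕ) : ℝ) * K) :=
        mul_le_mul_of_nonneg_left key hc2
    _ = (l : ℝ) * (2 * l - 1) * K / N := by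
      push_cast [Nat.cast_sub (by omega : 1 ≤ 2 * l)]
      have hpow : ((N : ℝ)) ^ (2 * l - 1) * (N : ℝ) = (N : ℝ) ^ (2 * l) := by
        rw [← pow_succ]
        congr 1
        omega
      have hpow2 : ((N : ℝ) ^ l) ^ 2 = (N : ℝ) ^ (2 * l) := by
        rw [← pow_mul, mul_comm]
      field_simp
      rw [hpow2, ← hpow]
      ring
end

section
/- Let H be a real Hilbert space, N ≥ 1 an integer, and let (V_{l,j,i})_{l,j,i ∈ {1,…,N}} be H-valued Bochner square-integrable random variables on a common probability space such that E‖V_{l,j,i}‖_H² ≤ K for all l, j, i, and E⟨V_{l₁,j,i}, V_{l₂,j,i}⟩_H = 0 whenever l₁ ≠ l₂, l₁ ∉ {i, j} and l₂ ∉ {i, j}. Then (1/N³) ∑_{i=1}^N ∑_{j=1}^N E‖∑_{l=1}^N V_{l,j,i}‖_H² ≤ 5K. -/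
open MeasureTheory
open scoped RealInnerProductSpace

section Aux
variable {Ω : Type*} [MeasurableSpace Ω] {P : Measure Ω}
  {H : Type*} [NormedAddCommGroup H] [InnerProductSpace ℝ H]

lemma memLp_norm_sq_integrable {f : Ω → H} (hf : MemLp f 2 P) :
    Integrable (fun ω => ‖f ω‖ ^ 2) P := by
  have := hf.integrable_norm_rpow two_ne_zero ENNReal.ofNat_ne_top
  simpa [ENNReal.toReal_ofNat, Real.rpow_natCast] using this

lemma integrable_inner_of_memLp {f g : Ω → H} (hf : MemLp f 2 P) (hg : MemLp g 2 P) :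
    Integrable (fun ω => ⟪f ω, g ω⟫) P := by
  refine Integrable.mono' (((memLp_norm_sq_integrable hf).add
    (memLp_norm_sq_integrable hg)).div_const 2)
    (hf.aestronglyMeasurable.inner hg.aestronglyMeasurable)
    (Filter.Eventually.of_forall fun ω => ?_)
  have h1 : |⟪f ω, g ω⟫| ≤ ‖f ω‖ * ‖g ω‖ := abs_real_inner_le_norm _ _
  have h2 : ‖f ω‖ * ‖g ω‖ ≤ (‖f ω‖ ^ 2 + ‖g ω‖ ^ 2) / 2 := by nlinarith [sq_nonneg (‖f ω‖ - ‖g ω‖)]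
  simpa [Real.norm_eq_abs] using h1.trans h2

lemma integral_inner_le_of_memLp {f g : Ω → H} (hf : MemLp f 2 P) (hg : MemLp g 2 P)
    {K : ℝ} (hfK : ∫ ω, ‖f ω‖ ^ 2 ∂P ≤ K) (hgK : ∫ ω, ‖g ω‖ ^ 2 ∂P ≤ K) :
    ∫ ω, ⟪f ω, g ω⟫ ∂P ≤ K := by
  have hint : ∫ ω, ⟪f ω, g ω⟫ ∂P ≤ ∫ ω, (‖f ω‖ ^ 2 + ‖g ω‖ ^ 2) / 2 ∂P := by
    refine integral_mono (integrable_inner_of_memLp hf hg)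
      (((memLp_norm_sq_integrable hf).add (memLp_norm_sq_integrable hg)).div_const 2)
      fun ω => ?_
    have h1 : ⟪f ω, g ω⟫ ≤ ‖f ω‖ * ‖g ω‖ := real_inner_le_norm _ _
    nlinarith [sq_nonneg (‖f ω‖ - ‖g ω‖)]
  have : ∫ ω, (‖f ω‖ ^ 2 + ‖g ω‖ ^ 2) / 2 ∂P
      = ((∫ ω, ‖f ω‖ ^ 2 ∂P) + ∫ ω, ‖g ω‖ ^ 2 ∂P) / 2 := by
    rw [integral_div, integral_add (memLp_norm_sq_integrable hf) (memLp_norm_sq_integrable hg)]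
  linarith [hint, this]

end Aux

/-- If `E‖V_{l,j,i}‖² ≤ K` for all `l,j,i` and
`E⟪V_{l₁,j,i}, V_{l₂,j,i}⟫ = 0` whenever `l₁ ≠ l₂` and `l₁, l₂ ∉ {i, j}`, then
`N⁻³ ∑ᵢ ∑ⱼ E‖∑ₗ V_{l,j,i}‖² ≤ 5K`. -/
theorem averaged_norm_sq_bound_three_indices
    {Ω : Type*} [MeasurableSpace Ω] (P : Measure Ω) [IsProbabilityMeasure P]
    {H : Type*} [NormedAddCommGroup H] [InnerProductSpace ℝ H] [CompleteSpace H]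
    (N : ℕ) (hN : 1 ≤ N) (V : Fin N → Fin N → Fin N → Ω → H) (K : ℝ)
    (hL2 : ∀ l j i, MemLp (V l j i) 2 P)
    (hbound : ∀ l j i, ∫ ω, ‖V l j i ω‖ ^ 2 ∂P ≤ K)
    (horth : ∀ l₁ l₂ j i : Fin N, l₁ ≠ l₂ → l₁ ≠ i → l₁ ≠ j → l₂ ≠ i → l₂ ≠ j →
      ∫ ω, ⟪V l₁ j i ω, V l₂ j i ω⟫ ∂P = 0) :
    (1 / (N : ℝ) ^ 3) * ∑ i, ∑ j, ∫ ω, ‖∑ l, V l j i ω‖ ^ 2 ∂P ≤ 5 * K := by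
  have hNpos : (0 : ℝ) < N := by exact_mod_cast hN
  haveI : NeZero N := ⟨Nat.one_le_iff_ne_zero.mp hN⟩
  have hK : 0 ≤ K := le_trans (integral_nonneg fun ω => sq_nonneg _) (hbound 0 0 0)
  -- Step 1: expand the norm squared
  have hexp : ∀ j i : Fin N, ∫ ω, ‖∑ l, V l j i ω‖ ^ 2 ∂P
      = ∑ l₁, ∑ l₂, ∫ ω, ⟪V l₁ j i ω, V l₂ j i ω⟫ ∂P := by
    intro j i
    have hpt : ∀ ω, ‖∑ l, V l j i ω‖ ^ 2 = ∑ l₁, ∑ l₂, ⟪V l₁ j i ω, V l₂ j i ω⟫ := by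
      intro ω
      rw [← real_inner_self_eq_norm_sq, sum_inner]
      exact Finset.sum_congr rfl fun l₁ _ => by rw [inner_sum]
    calc ∫ ω, ‖∑ l, V l j i ω‖ ^ 2 ∂P
        = ∫ ω, ∑ l₁, ∑ l₂, ⟪V l₁ j i ω, V l₂ j i ω⟫ ∂P := by
          exact integral_congr_ae (Filter.Eventually.of_forall hpt)
      _ = ∑ l₁, ∑ l₂, ∫ ω, ⟪V l₁ j i ω, V l₂ j i ω⟫ ∂P := by
          rw [integral_finset_sum]
          · exact Finset.sum_congr rfl fun l₁ _ => integral_finset_sum _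
              fun l₂ _ => integrable_inner_of_memLp (hL2 l₁ j i) (hL2 l₂ j i)
          · exact fun l₁ _ => integrable_finset_sum _
              fun l₂ _ => integrable_inner_of_memLp (hL2 l₁ j i) (hL2 l₂ j i)
    -- done
  -- Step 2: bound the double sum for fixed i j
  have hkey : ∀ j i : Fin N,
      ∑ l₁, ∑ l₂, (∫ ω, ⟪V l₁ j i ω, V l₂ j i ω⟫ ∂P) ≤ 5 * N * K := by
    intro j i
    have hterm : ∀ l₁ l₂ : Fin N, (∫ ω, ⟪V l₁ j i ω, V l₂ j i ω⟫ ∂P)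
        ≤ (if l₁ = l₂ then K else 0) + (if l₁ = i then K else 0) + (if l₁ = j then K else 0)
          + (if l₂ = i then K else 0) + (if l₂ = j then K else 0) := by
      intro l₁ l₂
      by_cases h : l₁ ≠ l₂ ∧ l₁ ≠ i ∧ l₁ ≠ j ∧ l₂ ≠ i ∧ l₂ ≠ j
      · obtain ⟨h1, h2, h3, h4, h5⟩ := h
        rw [horth l₁ l₂ j i h1 h2 h3 h4 h5]
        simp only [h1, h2, h3, h4, h5, if_neg]
        positivity
      · push_neg at h
        have hle : (∫ ω, ⟪V l₁ j i ω, V l₂ j i ω⟫ ∂P) ≤ K :=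
          integral_inner_le_of_memLp (hL2 l₁ j i) (hL2 l₂ j i) (hbound l₁ j i) (hbound l₂ j i)
        have t1 : (0:ℝ) ≤ if l₁ = l₂ then K else 0 := by positivity
        have t2 : (0:ℝ) ≤ if l₁ = i then K else 0 := by positivity
        have t3 : (0:ℝ) ≤ if l₁ = j then K else 0 := by positivity
        have t4 : (0:ℝ) ≤ if l₂ = i then K else 0 := by positivity
        have t5 : (0:ℝ) ≤ if l₂ = j then K else 0 := by positivity
        by_cases h1 : l₁ = l₂
        · have e : (if l₁ = l₂ then K else 0) = K := if_pos h1
          linarith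
        · by_cases h2 : l₁ = i
          · have e : (if l₁ = i then K else 0) = K := if_pos h2
            linarith
          · by_cases h3 : l₁ = j
            · have e : (if l₁ = j then K else 0) = K := if_pos h3
              linarith
            · by_cases h4 : l₂ = i
              · have e : (if l₂ = i then K else 0) = K := if_pos h4
                linarith
              · have h5 : l₂ = j := by tauto
                have e : (if l₂ = j then K else 0) = K := if_pos h5
                linarith
    calc ∑ l₁, ∑ l₂, (∫ ω, ⟪V l₁ j i ω, V l₂ j i ω⟫ ∂P)
        ≤ ∑ l₁ : Fin N, ∑ l₂ : Fin N,
            ((if l₁ = l₂ then K else 0) + (if l₁ = i then K else 0) + (if l₁ = j then K else 0)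
              + (if l₂ = i then K else 0) + (if l₂ = j then K else 0)) :=
          Finset.sum_le_sum fun l₁ _ => Finset.sum_le_sum fun l₂ _ => hterm l₁ l₂
      _ = 5 * N * K := by
          simp [Finset.sum_add_distrib, Finset.sum_ite_eq, Finset.sum_ite_eq',
            Finset.mul_sum, Finset.card_univ]
          ring
  -- Step 3: combine
  have hsum : ∑ i : Fin N, ∑ j : Fin N, ∫ ω, ‖∑ l, V l j i ω‖ ^ 2 ∂P
      ≤ N * (N * (5 * N * K)) := by
    calc ∑ i : Fin N, ∑ j : Fin N, ∫ ω, ‖∑ l, V l j i ω‖ ^ 2 ∂P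
        ≤ ∑ _i : Fin N, ∑ _j : Fin N, 5 * N * K := by
          refine Finset.sum_le_sum fun i _ => Finset.sum_le_sum fun j _ => ?_
          rw [hexp j i]; exact hkey j i
      _ = N * (N * (5 * N * K)) := by
          simp [Finset.sum_const, Finset.card_univ]
  rw [div_mul_eq_mul_div, one_mul, div_le_iff₀ (by positivity)]
  calc ∑ i : Fin N, ∑ j : Fin N, ∫ ω, ‖∑ l, V l j i ω‖ ^ 2 ∂P
      ≤ N * (N * (5 * N * K)) := hsum
    _ = 5 * K * (N:ℝ) ^ 3 := by ring
end

section
/- Let λ > 0, T > 0, γ ∈ (0, 1], and let g : [0,T] → ℝ be a bounded measurable function. Then the function F(t) = ∫₀ᵗ e^{−λ(t−s)} g(s) ds satisfies, for all 0 ≤ s ≤ t ≤ T, the Hölder bound |F(t) − F(s)| ≤ 2 (t−s)^γ λ^{γ−1} · sup_{r ∈ [0,T]} |g(r)|. -/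
open MeasureTheory

/-- The Duhamel integral `F(t) = ∫₀ᵗ e^{−λ(t−s)} g(s) ds`. -/
noncomputable def duhamel (lam : ℝ) (g : ℝ → ℝ) (t : ℝ) : ℝ :=
  ∫ s in (0:ℝ)..t, Real.exp (-lam * (t - s)) * g s

lemma exp_integral_aux (lam c a b : ℝ) (hlam : 0 < lam) :
    ∫ r in a..b, Real.exp (-lam * (c - r))
      = (Real.exp (-lam * (c - b)) - Real.exp (-lam * (c - a))) / lam := by
  have h : ∀ x ∈ Set.uIcc a b,
      HasDerivAt (fun r => Real.exp (-lam * (c - r)) / lam) (Real.exp (-lam * (c - x))) x := by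
    intro x _
    have h1 : HasDerivAt (fun r : ℝ => c - r) (-1) x := (hasDerivAt_id x).const_sub c
    have h2 : HasDerivAt (fun r : ℝ => -lam * (c - r)) (-lam * -1) x := h1.const_mul (-lam)
    have h4 := h2.exp.div_const lam
    refine h4.congr_deriv ?_
    rw [neg_mul_neg, mul_one, mul_div_assoc, div_self hlam.ne', mul_one]
  have hint : IntervalIntegrable (fun r => Real.exp (-lam * (c - r))) volume a b :=
    (by fun_prop : Continuous fun r : ℝ => Real.exp (-lam * (c - r))).intervalIntegrable a b
  rw [intervalIntegral.integral_eq_sub_of_hasDerivAt h hint]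
  ring

lemma min_le_rpow_aux {lam γ a : ℝ} (hlam : 0 < lam) (hγ : 0 < γ) (hγ1 : γ ≤ 1) (ha : 0 ≤ a) :
    min a (1 / lam) ≤ a ^ γ * lam ^ (γ - 1) := by
  rcases eq_or_lt_of_le ha with h0 | ha'
  · rw [← h0, Real.zero_rpow hγ.ne', zero_mul, min_eq_left (by positivity)]
  rcases le_total (lam * a) 1 with h | h
  · have hal : a ≤ 1 / lam := by rw [le_div_iff₀ hlam]; nlinarith
    have key : lam ^ (γ - 1) = (1 / lam) ^ (1 - γ) := by
      rw [one_div, Real.inv_rpow hlam.le, ← Real.rpow_neg hlam.le]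
      ring_nf
    calc min a (1 / lam) ≤ a := min_le_left _ _
      _ = a ^ γ * a ^ (1 - γ) := by
          rw [← Real.rpow_add ha']; norm_num
      _ ≤ a ^ γ * lam ^ (γ - 1) := by
          rw [key]
          exact mul_le_mul_of_nonneg_left
            (Real.rpow_le_rpow ha hal (by linarith : (0:ℝ) ≤ 1 - γ)) (Real.rpow_nonneg ha γ)
  · have key : a ^ γ * lam ^ (γ - 1) = (a * lam) ^ γ / lam := by
      rw [Real.mul_rpow ha hlam.le, Real.rpow_sub hlam, Real.rpow_one]
      ring
    have h1 : (1 : ℝ) ≤ (a * lam) ^ γ := by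
      calc (1 : ℝ) = 1 ^ γ := (Real.one_rpow γ).symm
        _ ≤ (a * lam) ^ γ := Real.rpow_le_rpow (by norm_num) (by nlinarith) hγ.le
    calc min a (1 / lam) ≤ 1 / lam := min_le_right _ _
      _ ≤ (a * lam) ^ γ / lam := by gcongr
      _ = a ^ γ * lam ^ (γ - 1) := key.symm

/-- For `λ > 0`, `T > 0`, `γ ∈ (0,1]` and bounded measurable
`g : [0,T] → ℝ`, the Duhamel integral `F(t) = ∫₀ᵗ e^{−λ(t−s)} g(s) ds` satisfies the
Hölder bound `|F(t) − F(s)| ≤ 2 (t−s)^γ λ^{γ−1} sup_{r∈[0,T]} |g(r)|` for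
`0 ≤ s ≤ t ≤ T`. -/
theorem duhamel_holder_bound (lam T γ : ℝ) (hlam : 0 < lam) (hT : 0 < T)
    (hγ : γ ∈ Set.Ioc (0:ℝ) 1) (g : ℝ → ℝ) (hmeas : Measurable g)
    (hbdd : ∃ B : ℝ, ∀ r ∈ Set.Icc (0:ℝ) T, |g r| ≤ B)
    (s t : ℝ) (hs : 0 ≤ s) (hst : s ≤ t) (htT : t ≤ T) :
    |duhamel lam g t - duhamel lam g s|
      ≤ 2 * (t - s) ^ γ * lam ^ (γ - 1) * ⨆ r : Set.Icc (0:ℝ) T, |g (r : ℝ)| := by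
  obtain ⟨hγ0, hγ1⟩ := hγ
  obtain ⟨B, hB⟩ := hbdd
  have hne : Nonempty (Set.Icc (0:ℝ) T) := ⟨⟨0, le_refl 0, hT.le⟩⟩
  set M := ⨆ r : Set.Icc (0:ℝ) T, |g (r : ℝ)| with hMdef
  have hbdd' : BddAbove (Set.range fun r : Set.Icc (0:ℝ) T => |g (r : ℝ)|) :=
    ⟨B, by rintro x ⟨r, rfl⟩; exact hB r r.2⟩
  have hgM : ∀ r ∈ Set.Icc (0:ℝ) T, |g r| ≤ M := fun r hr =>
    le_ciSup hbdd' (⟨r, hr⟩ : Set.Icc (0:ℝ) T)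
  have hM0 : 0 ≤ M := le_trans (abs_nonneg _) (hgM 0 ⟨le_refl 0, hT.le⟩)
  have hsT : s ≤ T := hst.trans htT
  -- integrability
  have hintg : ∀ c a b : ℝ, 0 ≤ a → a ≤ b → b ≤ T →
      IntervalIntegrable (fun r => Real.exp (-lam * (c - r)) * g r) volume a b := by
    intro c a b ha hab hbT
    rw [intervalIntegrable_iff_integrableOn_Icc_of_le hab]
    have hm : Measurable fun r => Real.exp (-lam * (c - r)) * g r :=
      (((measurable_const.sub measurable_id).const_mul (-lam)).exp).mul hmeas
    apply Measure.integrableOn_of_bounded (M := Real.exp (|lam| * (|c| + T)) * M)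
      (by simp) hm.aestronglyMeasurable
    filter_upwards [ae_restrict_mem measurableSet_Icc] with r hr
    have hr0 : 0 ≤ r := ha.trans hr.1
    have hrT : r ≤ T := hr.2.trans hbT
    have hb1 : Real.exp (-lam * (c - r)) ≤ Real.exp (|lam| * (|c| + T)) := by
      apply Real.exp_le_exp.mpr
      have h1 : |(-lam) * (c - r)| ≤ |lam| * (|c| + T) := by
        rw [abs_mul, abs_neg]
        apply mul_le_mul_of_nonneg_left _ (abs_nonneg lam)
        calc |c - r| ≤ |c| + |r| := abs_sub c r
          _ ≤ |c| + T := by rw [abs_of_nonneg hr0]; linarith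
      linarith [le_abs_self ((-lam) * (c - r))]
    rw [Real.norm_eq_abs, abs_mul, Real.abs_exp]
    exact mul_le_mul hb1 (hgM r ⟨hr0, hrT⟩) (abs_nonneg _) (Real.exp_pos _).le
  have h1 : IntervalIntegrable (fun r => Real.exp (-lam * (t - r)) * g r) volume 0 s :=
    hintg t 0 s le_rfl hs hsT
  have h2 : IntervalIntegrable (fun r => Real.exp (-lam * (t - r)) * g r) volume s t :=
    hintg t s t hs hst htT
  have h3 : IntervalIntegrable (fun r => Real.exp (-lam * (s - r)) * g r) volume 0 s :=
    hintg s 0 s le_rfl hs hsT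
  -- decomposition
  have hsplit : duhamel lam g t = Real.exp (-lam * (t - s)) * duhamel lam g s
      + ∫ r in s..t, Real.exp (-lam * (t - r)) * g r := by
    have hadd := intervalIntegral.integral_add_adjacent_intervals h1 h2
    unfold duhamel
    rw [← hadd]
    congr 1
    rw [← intervalIntegral.integral_const_mul]
    apply intervalIntegral.integral_congr
    intro r _
    show Real.exp (-lam * (t - r)) * g r
      = Real.exp (-lam * (t - s)) * (Real.exp (-lam * (s - r)) * g r)
    rw [← mul_assoc, ← Real.exp_add]
    have h : -lam * (t - s) + -lam * (s - r) = -lam * (t - r) := by ring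
    rw [h]
  -- bound on F(s)
  have hFs : |duhamel lam g s| ≤ (1 - Real.exp (-lam * (s - 0))) / lam * M := by
    unfold duhamel
    calc |∫ r in (0:ℝ)..s, Real.exp (-lam * (s - r)) * g r|
        ≤ ∫ r in (0:ℝ)..s, |Real.exp (-lam * (s - r)) * g r| :=
          intervalIntegral.abs_integral_le_integral_abs hs
      _ ≤ ∫ r in (0:ℝ)..s, Real.exp (-lam * (s - r)) * M := by
          apply intervalIntegral.integral_mono_on hs h3.abs
            ((by fun_prop : Continuous fun r : ℝ => Real.exp (-lam * (s - r)) * M).intervalIntegrable 0 s)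
          intro r hr
          rw [abs_mul, Real.abs_exp]
          exact mul_le_mul_of_nonneg_left (hgM r ⟨hr.1, hr.2.trans hsT⟩) (Real.exp_pos _).le
      _ = (1 - Real.exp (-lam * (s - 0))) / lam * M := by
          rw [intervalIntegral.integral_mul_const, exp_integral_aux lam s 0 s hlam]
          norm_num
  -- bound on the second term
  have hT2 : |∫ r in s..t, Real.exp (-lam * (t - r)) * g r|
      ≤ (1 - Real.exp (-lam * (t - s))) / lam * M := by
    calc |∫ r in s..t, Real.exp (-lam * (t - r)) * g r|
        ≤ ∫ r in s..t, |Real.exp (-lam * (t - r)) * g r| :=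
          intervalIntegral.abs_integral_le_integral_abs hst
      _ ≤ ∫ r in s..t, Real.exp (-lam * (t - r)) * M := by
          apply intervalIntegral.integral_mono_on hst h2.abs
            ((by fun_prop : Continuous fun r : ℝ => Real.exp (-lam * (t - r)) * M).intervalIntegrable s t)
          intro r hr
          rw [abs_mul, Real.abs_exp]
          exact mul_le_mul_of_nonneg_left (hgM r ⟨hs.trans hr.1, hr.2.trans htT⟩) (Real.exp_pos _).le
      _ = (1 - Real.exp (-lam * (t - s))) / lam * M := by
          rw [intervalIntegral.integral_mul_const, exp_integral_aux lam t s t hlam]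
          norm_num
  set Δ := t - s with hΔdef
  have hΔ : 0 ≤ Δ := by simp [hΔdef]; linarith
  have he1 : Real.exp (-lam * Δ) ≤ 1 := Real.exp_le_one_iff.mpr (by nlinarith)
  have he0 : 0 < Real.exp (-lam * Δ) := Real.exp_pos _
  -- 1 - e^{-λΔ} ≤ min(λΔ, 1)
  have hle : 1 - Real.exp (-lam * Δ) ≤ min (lam * Δ) 1 := by
    apply le_min
    · have := Real.add_one_le_exp (-lam * Δ)
      linarith
    · linarith
  have hmin : min (lam * Δ) 1 / lam = min Δ (1 / lam) := by
    rw [← min_div_div_right hlam.le, mul_div_cancel_left₀ _ hlam.ne']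
  have hkey : (1 - Real.exp (-lam * Δ)) / lam * M ≤ Δ ^ γ * lam ^ (γ - 1) * M := by
    apply mul_le_mul_of_nonneg_right _ hM0
    calc (1 - Real.exp (-lam * Δ)) / lam ≤ min (lam * Δ) 1 / lam := by gcongr
      _ = min Δ (1 / lam) := hmin
      _ ≤ Δ ^ γ * lam ^ (γ - 1) := min_le_rpow_aux hlam hγ0 hγ1 hΔ
  have hFs' : |duhamel lam g s| ≤ M / lam := by
    refine hFs.trans ?_
    have hstep : (1 - Real.exp (-lam * (s - 0))) * M ≤ M := by
      nlinarith [Real.exp_pos (-lam * (s - 0))]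
    calc (1 - Real.exp (-lam * (s - 0))) / lam * M
        = (1 - Real.exp (-lam * (s - 0))) * M / lam := by ring
      _ ≤ M / lam := (div_le_div_iff_of_pos_right hlam).mpr hstep
  have habs : |Real.exp (-lam * Δ) - 1| = 1 - Real.exp (-lam * Δ) := by
    rw [abs_sub_comm, abs_of_nonneg (by linarith)]
  calc |duhamel lam g t - duhamel lam g s|
      = |(Real.exp (-lam * Δ) - 1) * duhamel lam g s
          + ∫ r in s..t, Real.exp (-lam * (t - r)) * g r| := by
        rw [hsplit]; congr 1; ring
    _ ≤ |(Real.exp (-lam * Δ) - 1) * duhamel lam g s|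
          + |∫ r in s..t, Real.exp (-lam * (t - r)) * g r| := abs_add_le _ _
    _ = (1 - Real.exp (-lam * Δ)) * |duhamel lam g s|
          + |∫ r in s..t, Real.exp (-lam * (t - r)) * g r| := by rw [abs_mul, habs]
    _ ≤ (1 - Real.exp (-lam * Δ)) * (M / lam) + (1 - Real.exp (-lam * Δ)) / lam * M :=
        add_le_add (mul_le_mul_of_nonneg_left hFs' (by linarith)) hT2
    _ = 2 * ((1 - Real.exp (-lam * Δ)) / lam * M) := by ring
    _ ≤ 2 * (Δ ^ γ * lam ^ (γ - 1) * M) := by linarith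
    _ = 2 * Δ ^ γ * lam ^ (γ - 1) * M := by ring
end
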